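/- Let P = [p_0:p_1:p_2] ∈ P^2 be a point with all coordinates nonzero (i.e. P ∈ P^2 \ Δ_1). Then for every integer t ≥ 1, I(P) ⋆ 𝔪^t = 𝔪^t. -/

import Mathlib

open MvPolynomial

noncomputable section

variable {K : Type*} [Field K]

/-- The Hadamard product of two ideals `I, J ⊆ K[x_0,x_1,x_2]`: introduce new variables
`y_0,y_1,y_2` and `z_0,z_1,z_2` (encoded via a sum type), map `I` via `x_i ↦ y_i`, `J` via
`x_i ↦ z_i`, add the relations `x_i − y_i z_i`, and eliminate `y, z` (i.e. take the
preimage in `K[x_0,x_1,x_2]`). -/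
def hadamard (I J : Ideal (MvPolynomial (Fin 3) K)) : Ideal (MvPolynomial (Fin 3) K) :=
  Ideal.comap
    (rename (Sum.inl : Fin 3 → Fin 3 ⊕ (Fin 3 ⊕ Fin 3)))
    (Ideal.map (rename (fun i : Fin 3 => (Sum.inr (Sum.inl i) : Fin 3 ⊕ (Fin 3 ⊕ Fin 3)))) I
      + Ideal.map (rename (fun i : Fin 3 => (Sum.inr (Sum.inr i) : Fin 3 ⊕ (Fin 3 ⊕ Fin 3)))) J
      + Ideal.span { f | ∃ i : Fin 3,
          f = X (Sum.inl i) - X (Sum.inr (Sum.inl i)) * X (Sum.inr (Sum.inr i)) })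

/-- The homogeneous vanishing ideal of the point `P = [p_0:p_1:p_2] ∈ ℙ²`, generated by
the forms `p_j x_i − p_i x_j`. -/
def pointIdeal (p : Fin 3 → K) : Ideal (MvPolynomial (Fin 3) K) :=
  Ideal.span { f | ∃ i j : Fin 3, f = C (p j) * X i - C (p i) * X j }

/-- The irrelevant ideal `𝔪 = ⟨x_0,x_1,x_2⟩` of `K[x_0,x_1,x_2]`. -/
def irrelevantIdeal (K : Type*) [Field K] : Ideal (MvPolynomial (Fin 3) K) :=
  Ideal.span (Set.range X)


open Sum in
private lemma aux_mul_sup_le {R : Type*} [CommRing R] (Rl B B' : Ideal R) :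
    (Rl ⊔ B) * (Rl ⊔ B') ≤ Rl ⊔ B * B' := by
  rw [Ideal.sup_mul, Ideal.mul_sup, Ideal.mul_sup]
  refine sup_le (sup_le ?_ ?_) (sup_le ?_ ?_)
  · exact le_sup_of_le_left Ideal.mul_le_right
  · exact le_sup_of_le_left Ideal.mul_le_left
  · exact le_sup_of_le_left Ideal.mul_le_right
  · exact le_sup_right

private lemma aux_span_inl_pow_le (K : Type*) [Field K] (n : ℕ) :
    (Ideal.span (Set.range fun i : Fin 3 =>
        (X (Sum.inl i) : MvPolynomial (Fin 3 ⊕ (Fin 3 ⊕ Fin 3)) K))) ^ n ≤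
      Ideal.span { f | ∃ i : Fin 3,
          f = X (Sum.inl i) - X (Sum.inr (Sum.inl i)) * X (Sum.inr (Sum.inr i)) }
        ⊔ (Ideal.span (Set.range fun i : Fin 3 =>
            (X (Sum.inr (Sum.inr i)) : MvPolynomial (Fin 3 ⊕ (Fin 3 ⊕ Fin 3)) K))) ^ n := by
  induction n with
  | zero => simp
  | succ n ih =>
    have hbase : Ideal.span (Set.range fun i : Fin 3 =>
        (X (Sum.inl i) : MvPolynomial (Fin 3 ⊕ (Fin 3 ⊕ Fin 3)) K)) ≤
        Ideal.span { f | ∃ i : Fin 3,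
            f = X (Sum.inl i) - X (Sum.inr (Sum.inl i)) * X (Sum.inr (Sum.inr i)) }
          ⊔ Ideal.span (Set.range fun i : Fin 3 =>
              (X (Sum.inr (Sum.inr i)) : MvPolynomial (Fin 3 ⊕ (Fin 3 ⊕ Fin 3)) K)) := by
      rw [Ideal.span_le]
      rintro _ ⟨i, rfl⟩
      have h : (X (Sum.inl i) : MvPolynomial (Fin 3 ⊕ (Fin 3 ⊕ Fin 3)) K) =
          (X (Sum.inl i) - X (Sum.inr (Sum.inl i)) * X (Sum.inr (Sum.inr i)))
            + X (Sum.inr (Sum.inl i)) * X (Sum.inr (Sum.inr i)) := by ring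
      show (X (Sum.inl i) : MvPolynomial (Fin 3 ⊕ (Fin 3 ⊕ Fin 3)) K) ∈ _
      rw [h]
      exact Ideal.add_mem _
        (Ideal.mem_sup_left (Ideal.subset_span ⟨i, rfl⟩))
        (Ideal.mem_sup_right (Ideal.mul_mem_left _ _ (Ideal.subset_span ⟨i, rfl⟩)))
    calc _ = _ ^ n * _ := pow_succ _ n
      _ ≤ _ := Ideal.mul_mono ih hbase
      _ ≤ _ := aux_mul_sup_le _ _ _
      _ = _ := by rw [← pow_succ]

theorem hadamard_pointIdeal_irrelevant_pow [IsAlgClosed K] (p : Fin 3 → K)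
    (hp : ∀ i, p i ≠ 0) (t : ℕ) (ht : 1 ≤ t) :
    hadamard (pointIdeal p) ((irrelevantIdeal K) ^ t) = (irrelevantIdeal K) ^ t := by
  classical
  have hmapz : Ideal.map (rename (fun i : Fin 3 =>
        (Sum.inr (Sum.inr i) : Fin 3 ⊕ (Fin 3 ⊕ Fin 3)))) ((irrelevantIdeal K) ^ t) =
      (Ideal.span (Set.range fun i : Fin 3 =>
        (X (Sum.inr (Sum.inr i)) : MvPolynomial (Fin 3 ⊕ (Fin 3 ⊕ Fin 3)) K))) ^ t := by
    rw [Ideal.map_pow, irrelevantIdeal, Ideal.map_span, ← Set.range_comp]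
    have hc : (⇑(rename (fun i : Fin 3 => (Sum.inr (Sum.inr i) : Fin 3 ⊕ (Fin 3 ⊕ Fin 3)))) ∘ X)
        = (fun i : Fin 3 => (X (Sum.inr (Sum.inr i)) : MvPolynomial (Fin 3 ⊕ (Fin 3 ⊕ Fin 3)) K)) := by
      funext i; simp
    rw [hc]
  have hmapx : Ideal.map (rename (Sum.inl : Fin 3 → Fin 3 ⊕ (Fin 3 ⊕ Fin 3)))
        ((irrelevantIdeal K) ^ t) =
      (Ideal.span (Set.range fun i : Fin 3 =>
        (X (Sum.inl i) : MvPolynomial (Fin 3 ⊕ (Fin 3 ⊕ Fin 3)) K))) ^ t := by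
    rw [Ideal.map_pow, irrelevantIdeal, Ideal.map_span, ← Set.range_comp]
    have hc : (⇑(rename (Sum.inl : Fin 3 → Fin 3 ⊕ (Fin 3 ⊕ Fin 3))) ∘ X)
        = (fun i : Fin 3 => (X (Sum.inl i) : MvPolynomial (Fin 3 ⊕ (Fin 3 ⊕ Fin 3)) K)) := by
      funext i; simp
    rw [hc]
  apply le_antisymm
  · -- hadamard ≤ 𝔪^t, via the evaluation ψ : y_i ↦ p_i, z_i ↦ p_i⁻¹ x_i, x_i ↦ x_i
    set ψ : MvPolynomial (Fin 3 ⊕ (Fin 3 ⊕ Fin 3)) K →ₐ[K] MvPolynomial (Fin 3) K :=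
      aeval (Sum.elim X (Sum.elim (fun i => C (p i)) (fun i => C (p i)⁻¹ * X i))) with hψ
    intro f hf
    have hA : (Ideal.map (rename (fun i : Fin 3 =>
            (Sum.inr (Sum.inl i) : Fin 3 ⊕ (Fin 3 ⊕ Fin 3)))) (pointIdeal p)
          + Ideal.map (rename (fun i : Fin 3 =>
            (Sum.inr (Sum.inr i) : Fin 3 ⊕ (Fin 3 ⊕ Fin 3)))) ((irrelevantIdeal K) ^ t)
          + Ideal.span { f | ∃ i : Fin 3,
              f = X (Sum.inl i) - X (Sum.inr (Sum.inl i)) * X (Sum.inr (Sum.inr i)) })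
        ≤ Ideal.comap ψ ((irrelevantIdeal K) ^ t) := by
      rw [Ideal.add_eq_sup, Ideal.add_eq_sup]
      refine sup_le (sup_le ?_ ?_) ?_
      · rw [Ideal.map_le_iff_le_comap, pointIdeal, Ideal.span_le]
        rintro _ ⟨i, j, rfl⟩
        simp only [SetLike.mem_coe, Ideal.mem_comap, map_sub, map_mul, aeval_C, rename_C, rename_X, aeval_X,
          Sum.elim_inr, Sum.elim_inl, hψ]
        rw [show (algebraMap K (MvPolynomial (Fin 3) K)) (p j) * C (p i)
            - (algebraMap K (MvPolynomial (Fin 3) K)) (p i) * C (p j) = 0 by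
          simp [algebraMap_eq]; ring]
        exact Ideal.zero_mem _
      · rw [hmapz, ← Ideal.map_le_iff_le_comap, Ideal.map_pow]
        apply Ideal.pow_right_mono
        rw [Ideal.map_span, ← Set.range_comp, Ideal.span_le]
        rintro _ ⟨i, rfl⟩
        simp only [Function.comp, aeval_X, Sum.elim_inr, hψ]
        exact Ideal.mul_mem_left _ _ (Ideal.subset_span ⟨i, rfl⟩)
      · rw [Ideal.span_le]
        rintro _ ⟨i, rfl⟩
        simp only [SetLike.mem_coe, Ideal.mem_comap, map_sub, map_mul, aeval_X, Sum.elim_inl, Sum.elim_inr, hψ]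
        rw [show (X i : MvPolynomial (Fin 3) K) - C (p i) * (C (p i)⁻¹ * X i) = 0 by
          rw [← mul_assoc, ← C_mul, mul_inv_cancel₀ (hp i), C_1, one_mul, sub_self]]
        exact Ideal.zero_mem _
    have h2 := hA hf
    rw [Ideal.mem_comap] at h2
    have hfeq : ψ (rename Sum.inl f) = f := by
      rw [hψ, aeval_rename]
      simp only [Sum.elim_comp_inl]
      exact (aeval_X_left_apply f)
    rwa [hfeq] at h2
  · -- 𝔪^t ≤ hadamard
    rw [hadamard, ← Ideal.map_le_iff_le_comap, hmapx]
    refine le_trans (aux_span_inl_pow_le K t) (sup_le ?_ ?_)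
    · exact le_sup_right
    · rw [← hmapz]
      exact le_sup_of_le_left le_sup_right
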